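/- arXiv:1301.7741 — 3 statements merged into one kernel-verified Lean document; each statement's English description precedes it below -/
import Mathlib

section
/- Let n ≥ 1 and let α₁, …, αₙ be distinct positive even integers. If k = (k₁, …, kₙ) ∈ ℝⁿ and K = diag(k₁, …, kₙ) satisfy det(s·Iₙ − K·B^{−1}) = ∏_{i=1}^n (s − (αᵢ² − 1)^{−1}) as polynomials in s, then k₁ + k₂ + ⋯ + kₙ < 1. -/
open Matrix Polynomial

noncomputable section

/-- The `n × n` tridiagonal matrix `B` of the Marx generator. -/
def marxB (n : ℕ) : Matrix (Fin n) (Fin n) ℝ :=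
  Matrix.of fun i j =>
    if i = j then (if (i : ℕ) = n - 1 then ((n : ℝ) + 1) / n else 2)
    else if (i : ℕ) + 1 = (j : ℕ) ∨ (j : ℕ) + 1 = (i : ℕ) then -1 else 0

def cc (n a b : ℕ) : ℝ :=
  ((min a b : ℝ) + 1) * (2 * n - ((max a b : ℝ) + 1)) / (2 * n)

lemma cc_le {a b : ℕ} (n : ℕ) (h : a ≤ b) :
    cc n a b = ((a : ℝ) + 1) * (2 * n - ((b : ℝ) + 1)) / (2 * n) := by
  unfold cc
  rw [min_eq_left (by exact_mod_cast h), max_eq_right (by exact_mod_cast h)]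

lemma cc_ge {a b : ℕ} (n : ℕ) (h : b ≤ a) :
    cc n a b = ((b : ℝ) + 1) * (2 * n - ((a : ℝ) + 1)) / (2 * n) := by
  unfold cc
  rw [min_eq_right (by exact_mod_cast h), max_eq_left (by exact_mod_cast h)]

lemma key (n a b : ℕ) (hn : 1 ≤ n) (ha : a < n) (hb : b < n) :
    (if a = n-1 then ((n:ℝ)+1)/n else 2) * cc n a b
      + (if 1 ≤ a then -cc n (a-1) b else 0)
      + (if a+1 ≤ n-1 then -cc n (a+1) b else 0)
    = if a = b then 1 else 0 := by
  have hn0 : (n : ℝ) ≠ 0 := Nat.cast_ne_zero.mpr (by omega)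
  by_cases han : a = n - 1
  · subst han
    rw [if_pos rfl, if_neg (show ¬(n-1+1 ≤ n-1) by omega)]
    by_cases hn2 : 2 ≤ n
    · rw [if_pos (show 1 ≤ n - 1 by omega)]
      have hble : b ≤ n - 1 := by omega
      rcases eq_or_lt_of_le hble with hbn | hbn
      · rw [if_pos hbn.symm, ← hbn, cc_le n le_rfl, cc_le n (by omega : b - 1 ≤ b),
          Nat.cast_sub (show 1 ≤ b by omega)]
        push_cast
        have hbr : (b : ℝ) = n - 1 := by
          rw [hbn, Nat.cast_sub hn]; norm_num
        rw [hbr]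
        field_simp
        ring
      · rw [if_neg (show ¬(n-1 = b) by omega), cc_ge n (by omega), cc_ge n (by omega),
          Nat.cast_sub (show 1 ≤ n - 1 by omega), Nat.cast_sub hn]
        push_cast
        field_simp
        ring
    · have h1 : n = 1 := by omega
      subst h1
      have hb0 : b = 0 := by omega
      subst hb0
      norm_num [cc]
  · rw [if_neg han, if_pos (show a + 1 ≤ n - 1 by omega)]
    by_cases ha0 : 1 ≤ a
    · rw [if_pos ha0]
      rcases lt_trichotomy a b with hab | hab | hab
      · rw [if_neg (by omega : ¬(a = b)), cc_le n (by omega), cc_le n (by omega),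
          cc_le n (by omega), Nat.cast_sub ha0]
        push_cast
        field_simp
        ring
      · subst hab
        rw [if_pos rfl, cc_le n le_rfl, cc_le n (by omega), cc_ge n (by omega),
          Nat.cast_sub ha0]
        push_cast
        field_simp
        ring
      · rw [if_neg (by omega : ¬(a = b)), cc_ge n (by omega), cc_ge n (by omega),
          cc_ge n (by omega), Nat.cast_sub ha0]
        push_cast
        field_simp
        ring
    · have ha' : a = 0 := by omega
      subst ha'
      rw [if_neg (by omega : ¬(1 ≤ 0))]
      rcases Nat.eq_zero_or_pos b with hb0 | hb0
      · subst hb0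
        rw [if_pos rfl, cc_le n le_rfl, cc_ge n (by omega)]
        push_cast
        field_simp
        ring
      · rw [if_neg (by omega : ¬(0 = b)), cc_le n (by omega), cc_le n (by omega)]
        push_cast
        field_simp
        ring


def marxC (n : ℕ) : Matrix (Fin n) (Fin n) ℝ := Matrix.of fun i j => cc n i j

lemma marxB_row (n : ℕ) (i l : Fin n) :
    marxB n i l =
      (if l = i then (if (i : ℕ) = n - 1 then ((n : ℝ) + 1) / n else 2) else 0)
      + (if (l : ℕ) + 1 = (i : ℕ) then (-1 : ℝ) else 0)
      + (if (i : ℕ) + 1 = (l : ℕ) then (-1 : ℝ) else 0) := by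
  simp only [marxB, Matrix.of_apply, Fin.ext_iff]
  split_ifs <;> first | (exfalso; omega) | ring1

lemma marxB_mul_marxC (n : ℕ) (hn : 1 ≤ n) : marxB n * marxC n = 1 := by
  ext i j
  rw [Matrix.mul_apply, Matrix.one_apply]
  have hsum : ∀ l : Fin n, marxB n i l * marxC n l j =
      (if l = i then (if (i:ℕ) = n-1 then ((n:ℝ)+1)/n * cc n l j else 2 * cc n l j) else 0)
      + (if (l:ℕ)+1 = (i:ℕ) then -cc n l j else 0)
      + (if (i:ℕ)+1 = (l:ℕ) then -cc n l j else 0) := by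
    intro l
    simp only [marxB_row, add_mul, ite_mul, zero_mul, neg_one_mul, marxC, Matrix.of_apply]
  rw [Finset.sum_congr rfl (fun l _ => hsum l), Finset.sum_add_distrib, Finset.sum_add_distrib,
    Finset.sum_ite_eq' Finset.univ i]
  have hT2 : ∑ l : Fin n, (if (l:ℕ)+1 = (i:ℕ) then -cc n l j else 0)
      = if 1 ≤ (i:ℕ) then -cc n ((i:ℕ)-1) j else 0 := by
    by_cases hi : 1 ≤ (i:ℕ)
    · rw [if_pos hi, Finset.sum_eq_single (⟨(i:ℕ)-1, by omega⟩ : Fin n)]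
      · rw [if_pos (by simp; omega)]
      · intro b _ hb
        rw [if_neg]
        intro hc
        exact hb (Fin.ext (by simp; omega))
      · intro h; exact absurd (Finset.mem_univ _) h
    · rw [if_neg hi]
      apply Finset.sum_eq_zero
      intro l _
      rw [if_neg (by omega)]
  have hT3 : ∑ l : Fin n, (if (i:ℕ)+1 = (l:ℕ) then -cc n l j else 0)
      = if (i:ℕ)+1 ≤ n-1 then -cc n ((i:ℕ)+1) j else 0 := by
    by_cases hi : (i:ℕ)+1 ≤ n-1
    · rw [if_pos hi, Finset.sum_eq_single (⟨(i:ℕ)+1, by omega⟩ : Fin n)]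
      · rw [if_pos (by simp)]
      · intro b _ hb
        rw [if_neg]
        intro hc
        exact hb (Fin.ext (by simp; omega))
      · intro h; exact absurd (Finset.mem_univ _) h
    · rw [if_neg hi]
      apply Finset.sum_eq_zero
      intro l _
      rw [if_neg (by omega)]
  rw [hT2, hT3, if_pos (Finset.mem_univ i)]
  rw [show (if i = j then (1:ℝ) else 0) = (if (i:ℕ) = (j:ℕ) then 1 else 0) by
    simp [Fin.ext_iff]]
  have K := key n (i:ℕ) (j:ℕ) hn i.isLt j.isLt
  rw [ite_mul] at K
  exact K



def marxV (n : ℕ) : Matrix (Fin (2*n)) (Fin n) ℝ :=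
  Matrix.of fun m j => (if (m:ℕ) ≤ (j:ℕ) then 1 else 0) - ((j:ℕ)+1)/(2*n)

lemma ind_sum (N K : ℕ) (h : K < N) :
    ∑ m ∈ Finset.range N, (if m ≤ K then (1:ℝ) else 0) = (K:ℝ)+1 := by
  rw [Finset.sum_boole]
  have : (Finset.range N).filter (fun m => m ≤ K) = Finset.range (K+1) := by
    ext m; simp; omega
  rw [this, Finset.card_range]
  push_cast
  ring

lemma marxV_gram (n : ℕ) (hn : 1 ≤ n) : (marxV n)ᴴ * marxV n = marxC n := by
  have h2n : (2*n : ℝ) ≠ 0 := by positivity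
  ext i j
  rw [Matrix.mul_apply]
  have hpt : ∀ m : Fin (2*n), (marxV n)ᴴ i m * marxV n m j =
      ((if (m:ℕ) ≤ min (i:ℕ) (j:ℕ) then (1:ℝ) else 0)
      - (if (m:ℕ) ≤ (i:ℕ) then (1:ℝ) else 0) * (((j:ℕ)+1)/(2*n))
      - (if (m:ℕ) ≤ (j:ℕ) then (1:ℝ) else 0) * (((i:ℕ)+1)/(2*n)))
      + (((i:ℕ)+1)/(2*n)) * (((j:ℕ)+1)/(2*n)) := by
    intro m
    simp only [marxV, Matrix.conjTranspose_apply, Matrix.of_apply, star_trivial]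
    split_ifs <;> first | (exfalso; omega) | ring1
  rw [Finset.sum_congr rfl (fun m _ => hpt m), Finset.sum_add_distrib,
    Finset.sum_sub_distrib, Finset.sum_sub_distrib, ← Finset.sum_mul, ← Finset.sum_mul,
    Finset.sum_const, Finset.card_univ]
  have e1 : ∑ m : Fin (2*n), (if (m:ℕ) ≤ min (i:ℕ) (j:ℕ) then (1:ℝ) else 0)
      = (((min (i:ℕ) (j:ℕ) : ℕ)) : ℝ) + 1 := by
    rw [Fin.sum_univ_eq_sum_range (fun m => if m ≤ min (i:ℕ) (j:ℕ) then (1:ℝ) else 0)]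
    exact ind_sum (2*n) (min (i:ℕ) (j:ℕ)) (by have := i.isLt; have := j.isLt; omega)
  have e2 : ∑ m : Fin (2*n), (if (m:ℕ) ≤ (i:ℕ) then (1:ℝ) else 0) = (i:ℝ) + 1 := by
    rw [Fin.sum_univ_eq_sum_range (fun m => if m ≤ (i:ℕ) then (1:ℝ) else 0)]
    exact ind_sum (2*n) (i:ℕ) (by have := i.isLt; omega)
  have e3 : ∑ m : Fin (2*n), (if (m:ℕ) ≤ (j:ℕ) then (1:ℝ) else 0) = (j:ℝ) + 1 := by
    rw [Fin.sum_univ_eq_sum_range (fun m => if m ≤ (j:ℕ) then (1:ℝ) else 0)]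
    exact ind_sum (2*n) (j:ℕ) (by have := j.isLt; omega)
  rw [e1, e2, e3, Fintype.card_fin, nsmul_eq_mul]
  show _ = marxC n i j
  simp only [marxC, Matrix.of_apply]
  rcases le_total (i:ℕ) (j:ℕ) with h | h
  · rw [min_eq_left h, cc_le n h]
    push_cast
    field_simp
    ring
  · rw [min_eq_right h, cc_ge n h]
    push_cast
    field_simp
    ring

variable {m : Type*} [Fintype m] [DecidableEq m]

lemma my_charpoly_conj (P M : Matrix m m ℝ) (hP : IsUnit P.det) :
    (P * M * P⁻¹).charpoly = M.charpoly := by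
  have h1 : (C : ℝ →+* ℝ[X]).mapMatrix P * (C : ℝ →+* ℝ[X]).mapMatrix P⁻¹ = 1 := by
    rw [← _root_.map_mul, Matrix.mul_nonsing_inv _ hP, _root_.map_one]
  have key : charmatrix (P * M * P⁻¹)
      = (C : ℝ →+* ℝ[X]).mapMatrix P * charmatrix M * (C : ℝ →+* ℝ[X]).mapMatrix P⁻¹ := by
    simp only [charmatrix]
    rw [_root_.map_mul, _root_.map_mul, mul_sub, sub_mul]
    congr 1
    rw [mul_assoc, (Matrix.scalar_commute (X : ℝ[X]) (fun r => Commute.all _ _) _).eq,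
      ← mul_assoc, h1, one_mul]
  rw [Matrix.charpoly, Matrix.charpoly, key, det_mul, det_mul]
  have h2 : ((C : ℝ →+* ℝ[X]).mapMatrix P).det * ((C : ℝ →+* ℝ[X]).mapMatrix P⁻¹).det = 1 := by
    rw [← det_mul, h1, det_one]
  calc ((C : ℝ →+* ℝ[X]).mapMatrix P).det * (charmatrix M).det
        * ((C : ℝ →+* ℝ[X]).mapMatrix P⁻¹).det
      = (charmatrix M).det * (((C : ℝ →+* ℝ[X]).mapMatrix P).det
        * ((C : ℝ →+* ℝ[X]).mapMatrix P⁻¹).det) := by ring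
    _ = (charmatrix M).det := by rw [h2, mul_one]

lemma eval_charpoly_eigenvalue (S : Matrix m m ℝ) (hS : S.IsHermitian) (i : m) :
    Polynomial.eval (hS.eigenvalues i) S.charpoly = 0 := by
  have hmem := hS.eigenvalues_mem_spectrum_real i
  rw [spectrum.mem_iff] at hmem
  set μ := hS.eigenvalues i
  have hdet : Polynomial.eval μ S.charpoly = det (algebraMap ℝ (Matrix m m ℝ) μ - S) := by
    rw [Matrix.charpoly, ← Polynomial.coe_evalRingHom, RingHom.map_det]
    congr 1
    ext a b
    by_cases hab : a = b
    · subst hab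
      simp [charmatrix_apply_eq, Matrix.algebraMap_matrix_apply]
    · simp [charmatrix_apply_ne _ _ _ hab, Matrix.algebraMap_matrix_apply, hab]
  rw [hdet]
  by_contra hne
  exact hmem ((Matrix.isUnit_iff_isUnit_det _).mpr (Ne.isUnit hne))

lemma posSemidef_of_roots_nonneg (S : Matrix m m ℝ) (hS : S.IsHermitian)
    (h : ∀ μ : ℝ, Polynomial.eval μ S.charpoly = 0 → 0 ≤ μ) : S.PosSemidef := by
  have heig : ∀ i, 0 ≤ hS.eigenvalues i := fun i => h _ (eval_charpoly_eigenvalue S hS i)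
  exact hS.posSemidef_iff_eigenvalues_nonneg.mpr (fun i => heig i)


lemma icc_sum (N : ℕ) :
    ∑ m ∈ Finset.Icc 1 N, ((2*(m:ℝ))^2 - 1)⁻¹ = (N:ℝ) / (2*(N:ℝ)+1) := by
  induction N with
  | zero => simp
  | succ N ih =>
    rw [Finset.sum_Icc_succ_top (by omega : 1 ≤ N + 1), ih]
    have h1 : (2*(N:ℝ)+1) ≠ 0 := by positivity
    have hNn : (0:ℝ) ≤ (N:ℝ) := Nat.cast_nonneg N
    have h2 : ((2*((N:ℝ)+1))^2 - 1) ≠ 0 := by nlinarith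
    push_cast
    have h3 : (2*((N:ℝ)+1))^2 - 1 = (2*(N:ℝ)+1)*(2*(N:ℝ)+3) := by ring
    rw [h3]
    have h4 : (2*(N:ℝ)+3) ≠ 0 := by positivity
    have h5 : (2*((N:ℝ)+1)+1) ≠ 0 := by positivity
    field_simp
    ring

lemma alpha_sum_lt (n : ℕ) (hn : 1 ≤ n) (α : Fin n → ℕ) (hdist : Function.Injective α)
    (hpos : ∀ i, 0 < α i) (heven : ∀ i, Even (α i)) :
    ∑ i, ((α i : ℝ)^2 - 1)⁻¹ < 1/2 := by
  have : Nonempty (Fin n) := ⟨⟨0, by omega⟩⟩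
  set β : Fin n → ℕ := fun i => α i / 2 with hβdef
  have hβ : ∀ i, α i = 2 * β i := by
    intro i
    obtain ⟨r, hr⟩ := heven i
    simp only [hβdef]
    omega
  have hβpos : ∀ i, 1 ≤ β i := by
    intro i
    have := hpos i
    have := hβ i
    omega
  have hβinj : Function.Injective β := by
    intro a b h
    apply hdist
    rw [hβ a, hβ b, h]
  have hre : ∑ i, ((α i : ℝ)^2 - 1)⁻¹ = ∑ i, ((2*((β i : ℕ):ℝ))^2 - 1)⁻¹ := by
    apply Finset.sum_congr rfl
    intro i _
    congr 2
    rw [hβ i]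
    push_cast
    ring
  rw [hre]
  have himg : ∑ i, ((2*((β i : ℕ):ℝ))^2 - 1)⁻¹
      = ∑ m ∈ Finset.univ.image β, ((2*(m:ℝ))^2 - 1)⁻¹ := by
    rw [Finset.sum_image (fun a _ b _ h => hβinj h)]
  rw [himg]
  have hne : (Finset.univ.image β).Nonempty := ⟨β ⟨0, by omega⟩, Finset.mem_image_of_mem _ (Finset.mem_univ _)⟩
  set N := (Finset.univ.image β).max' hne with hN
  have hsub : Finset.univ.image β ⊆ Finset.Icc 1 N := by
    intro t ht
    rw [Finset.mem_Icc]
    constructor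
    · obtain ⟨i, _, hi⟩ := Finset.mem_image.mp ht
      rw [← hi]; exact hβpos i
    · exact Finset.le_max' _ t ht
  calc ∑ m ∈ Finset.univ.image β, ((2*(m:ℝ))^2 - 1)⁻¹
      ≤ ∑ m ∈ Finset.Icc 1 N, ((2*(m:ℝ))^2 - 1)⁻¹ := by
        apply Finset.sum_le_sum_of_subset_of_nonneg hsub
        intro m hm _
        have h1 : 1 ≤ m := (Finset.mem_Icc.mp hm).1
        have : (1:ℝ) ≤ (m:ℝ) := by exact_mod_cast h1
        have : (1:ℝ) ≤ (2*(m:ℝ))^2 - 1 := by nlinarith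
        positivity
    _ = (N:ℝ) / (2*(N:ℝ)+1) := icc_sum N
    _ < 1/2 := by
        rw [div_lt_iff₀ (by positivity)]
        nlinarith [Nat.cast_nonneg (α := ℝ) N]

/-- any solution `k` of the inverse eigenvalue problem
`σ(K B⁻¹) = {(αᵢ² - 1)⁻¹}`, with the `αᵢ` distinct positive even integers,
satisfies `k₁ + ⋯ + kₙ < 1`. -/
theorem statement3 (n : ℕ) (hn : 1 ≤ n) (α : Fin n → ℕ)
    (hdist : Function.Injective α) (hpos : ∀ i, 0 < α i) (heven : ∀ i, Even (α i))
    (k : Fin n → ℝ)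
    (hspec : (Matrix.diagonal k * (marxB n)⁻¹).charpoly
      = ∏ i, (Polynomial.X - Polynomial.C (((α i : ℝ) ^ 2 - 1)⁻¹))) :
    ∑ i, k i < 1 := by
  classical
  have hBC : marxB n * marxC n = 1 := marxB_mul_marxC n hn
  have hCB : marxC n * marxB n = 1 := mul_eq_one_comm.mp hBC
  have hBinv : (marxB n)⁻¹ = marxC n := Matrix.inv_eq_right_inv hBC
  rw [hBinv] at hspec
  have hCpsd : (marxC n).PosSemidef := by
    rw [← marxV_gram n hn]
    exact Matrix.posSemidef_conjTranspose_mul_self _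
  set W := (open scoped MatrixOrder in CFC.sqrt (marxC n)) with hWdef
  have hWW : W * W = marxC n := by
    open scoped MatrixOrder in exact CFC.sqrt_mul_sqrt_self _ hCpsd.nonneg
  have hWherm : W.IsHermitian := by
    open scoped MatrixOrder in exact (CFC.sqrt_nonneg _).posSemidef.1
  have hdetC : IsUnit (marxC n).det := by
    apply IsUnit.of_mul_eq_one (marxB n).det
    rw [← Matrix.det_mul, hCB, Matrix.det_one]
  have hdetW : IsUnit W.det := by
    apply isUnit_of_mul_isUnit_left (y := W.det)
    rw [← Matrix.det_mul, hWW]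
    exact hdetC
  have hWinv : W * W⁻¹ = 1 := Matrix.mul_nonsing_inv _ hdetW
  have hWinv' : W⁻¹ * W = 1 := Matrix.nonsing_inv_mul _ hdetW
  set S := W * Matrix.diagonal k * W with hSdef
  have hSconj : S = W * (Matrix.diagonal k * marxC n) * W⁻¹ := by
    rw [← hWW, show W * (Matrix.diagonal k * (W * W)) * W⁻¹
      = W * Matrix.diagonal k * W * (W * W⁻¹) by noncomm_ring, hWinv, mul_one]
  have hSchar : S.charpoly = (Matrix.diagonal k * marxC n).charpoly := by
    rw [hSconj]
    exact my_charpoly_conj _ _ hdetW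
  have hDherm : (Matrix.diagonal k).IsHermitian := Matrix.isHermitian_diagonal k
  have hSherm : S.IsHermitian := by
    show Sᴴ = S
    rw [hSdef, Matrix.conjTranspose_mul, Matrix.conjTranspose_mul, hWherm.eq, hDherm.eq,
      Matrix.mul_assoc]
  have hSpsd : S.PosSemidef := by
    apply posSemidef_of_roots_nonneg S hSherm
    intro μ hμ
    rw [hSchar, hspec, Polynomial.eval_prod] at hμ
    obtain ⟨i, _, hi⟩ := Finset.prod_eq_zero_iff.mp hμ
    simp only [Polynomial.eval_sub, Polynomial.eval_X, Polynomial.eval_C] at hi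
    have hμeq : μ = ((α i : ℝ) ^ 2 - 1)⁻¹ := by linarith [sub_eq_zero.mp hi]
    have hα : 2 ≤ α i := by
      have := hpos i
      obtain ⟨r, hr⟩ := heven i
      omega
    have hαR : (2:ℝ) ≤ (α i : ℝ) := by exact_mod_cast hα
    have : (1:ℝ) ≤ (α i : ℝ) ^ 2 - 1 := by nlinarith
    rw [hμeq]
    apply inv_nonneg.mpr
    linarith
  have hWiherm : (W⁻¹).IsHermitian := hWherm.inv
  have hknn : ∀ j, 0 ≤ k j := by
    intro j
    have hDK : Matrix.diagonal k = W⁻¹ * S * W⁻¹ := by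
      rw [hSdef, show W⁻¹ * (W * Matrix.diagonal k * W) * W⁻¹
        = (W⁻¹ * W) * Matrix.diagonal k * (W * W⁻¹) by noncomm_ring, hWinv, hWinv',
        one_mul, mul_one]
    set y : Fin n → ℝ := fun a => W⁻¹ a j with hy
    have hsym : ∀ a b, W⁻¹ a b = W⁻¹ b a := by
      intro a b
      conv_lhs => rw [← hWiherm.eq]
      simp [Matrix.conjTranspose_apply]
    have hval : k j = dotProduct y (S *ᵥ y) := by
      have h1 : k j = (W⁻¹ * S * W⁻¹) j j := by
        rw [← hDK]
        simp [Matrix.diagonal_apply]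
      rw [h1]
      simp only [Matrix.mul_apply, dotProduct, Matrix.mulVec]
      rw [Finset.sum_congr rfl (fun b _ => Finset.sum_mul _ _ _), Finset.sum_comm]
      apply Finset.sum_congr rfl
      intro a _
      rw [Finset.mul_sum]
      apply Finset.sum_congr rfl
      intro b _
      rw [hsym j a]
      simp only [hy]
      ring
    rw [hval]
    have h2 := hSpsd.dotProduct_mulVec_nonneg y
    simpa using h2
  -- trace identity
  have htrace : ∑ j, k j * marxC n j j = ∑ i, ((α i : ℝ) ^ 2 - 1)⁻¹ := by
    have hsplits : (Matrix.diagonal k * marxC n).charpoly.Splits := by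
      rw [hspec]
      exact Polynomial.Splits.prod (fun i _ => Polynomial.Splits.X_sub_C _)
    have h2 := Matrix.trace_eq_sum_roots_charpoly_of_splits hsplits
    have h1 : (Matrix.diagonal k * marxC n).trace = ∑ j, k j * marxC n j j := by
      simp [Matrix.trace, Matrix.diag, Matrix.mul_apply, Matrix.diagonal_apply, ite_mul,
        zero_mul, Finset.sum_ite_eq]
    have hroots : (Matrix.diagonal k * marxC n).charpoly.roots
        = Finset.univ.val.map (fun i => ((α i : ℝ) ^ 2 - 1)⁻¹) := by
      rw [hspec]
      have h3 := Polynomial.roots_multiset_prod_X_sub_C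
        (Finset.univ.val.map (fun i => ((α i : ℝ) ^ 2 - 1)⁻¹))
      rw [← h3]
      congr 1
      rw [Multiset.map_map]
      rfl
    rw [← h1, h2, hroots]
    rfl
  have hnR : (1:ℝ) ≤ (n:ℝ) := by exact_mod_cast hn
  have hdiag : ∀ j : Fin n, (2*(n:ℝ)-1)/(2*(n:ℝ)) ≤ marxC n j j := by
    intro j
    have hj : ((j:ℕ):ℝ) ≤ (n:ℝ) - 1 := by
      have := j.isLt
      have : ((j:ℕ):ℝ) ≤ (n:ℝ) - 1 ↔ ((j:ℕ):ℝ) + 1 ≤ (n:ℝ) := by constructor <;> intro <;> linarith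
      rw [this]
      exact_mod_cast j.isLt
    show (2*(n:ℝ)-1)/(2*(n:ℝ)) ≤ cc n (j:ℕ) (j:ℕ)
    rw [cc_le n le_rfl]
    have hjn : (0:ℝ) ≤ ((j:ℕ):ℝ) := Nat.cast_nonneg _
    rw [div_le_div_iff_of_pos_right (show (0:ℝ) < 2*(n:ℝ) by linarith)]
    nlinarith
  have hlam : ∑ i, ((α i : ℝ) ^ 2 - 1)⁻¹ < 1/2 := alpha_sum_lt n hn α hdist hpos heven
  have hc0 : (0:ℝ) < 2*(n:ℝ)/(2*(n:ℝ)-1) := by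
    apply div_pos <;> linarith
  calc ∑ i, k i ≤ ∑ j, (2*(n:ℝ)/(2*(n:ℝ)-1)) * (k j * marxC n j j) := by
        apply Finset.sum_le_sum
        intro j _
        have h1 : k j * ((2*(n:ℝ)-1)/(2*(n:ℝ))) ≤ k j * marxC n j j :=
          mul_le_mul_of_nonneg_left (hdiag j) (hknn j)
        have hcd : (2*(n:ℝ)/(2*(n:ℝ)-1)) * ((2*(n:ℝ)-1)/(2*(n:ℝ))) = 1 := by
          have ha : (2*(n:ℝ)-1) ≠ 0 := by linarith
          have hb : (2*(n:ℝ)) ≠ 0 := by linarith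
          field_simp
        calc k j = (2*(n:ℝ)/(2*(n:ℝ)-1)) * (k j * ((2*(n:ℝ)-1)/(2*(n:ℝ)))) := by
              rw [mul_comm (k j), ← mul_assoc, hcd, one_mul]
          _ ≤ (2*(n:ℝ)/(2*(n:ℝ)-1)) * (k j * marxC n j j) :=
              mul_le_mul_of_nonneg_left h1 (le_of_lt hc0)
    _ = (2*(n:ℝ)/(2*(n:ℝ)-1)) * ∑ j, k j * marxC n j j := by
        rw [Finset.mul_sum]
    _ < (2*(n:ℝ)/(2*(n:ℝ)-1)) * (1/2) := by
        rw [htrace]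
        exact mul_lt_mul_of_pos_left hlam hc0
    _ ≤ 1 := by
        rw [show (2*(n:ℝ)/(2*(n:ℝ)-1)) * (1/2) = (n:ℝ)/(2*(n:ℝ)-1) by ring]
        rw [div_le_one (by linarith)]
        linarith

end
end

section
/- Let n ≥ 2. Then every diagonal entry of B^{−1} is strictly greater than 1/2; moreover for n = 1 the unique entry of B^{−1} equals 1/2. -/
open Matrix Polynomial

noncomputable section

def marxM (n : ℕ) : Matrix (Fin n) (Fin n) ℝ :=
  Matrix.of fun i j =>
    ((min (i:ℕ) (j:ℕ) : ℝ) + 1) * (2*(n:ℝ) - 1 - (max (i:ℕ) (j:ℕ) : ℝ)) / (2*(n:ℝ))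

lemma marxB_decomp (n : ℕ) (hn : 1 ≤ n) (i j : Fin n) :
    marxB n i j = (if i = j then 2 else 0) + (if (i:ℕ)+1 = (j:ℕ) then (-1:ℝ) else 0)
      + (if (j:ℕ)+1 = (i:ℕ) then (-1:ℝ) else 0)
      + (if i = j ∧ (i:ℕ) = n-1 then 1/(n:ℝ) - 1 else 0) := by
  have hn' : (n:ℝ) ≠ 0 := by positivity
  simp only [marxB, of_apply]
  by_cases hij : i = j
  · have hv : (i:ℕ) = (j:ℕ) := by rw [hij]
    have h1 : ¬ ((i:ℕ)+1 = (j:ℕ)) := by omega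
    have h2 : ¬ ((j:ℕ)+1 = (i:ℕ)) := by omega
    simp only [hij, if_pos rfl, if_neg h1, if_neg h2, hv]
    by_cases h3 : (j:ℕ) = n - 1
    · simp only [if_pos h3, true_and, if_true]
      simp
      field_simp
      ring
    · simp [h3]
  · have hv : ¬ ((i:ℕ) = (j:ℕ)) := fun h => hij (Fin.ext h)
    simp only [if_neg hij, hij, false_and, if_false, add_zero]
    by_cases h1 : (i:ℕ)+1 = (j:ℕ)
    · have h2 : ¬ ((j:ℕ)+1 = (i:ℕ)) := by omega
      simp [h1, h2]
    · by_cases h2 : (j:ℕ)+1 = (i:ℕ)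
      · simp [h1, h2]
      · simp [h1, h2]

lemma sum_ite_eq_self {n : ℕ} (i : Fin n) (c : ℝ) (v : Fin n → ℝ) :
    ∑ j, (if i = j then c else 0) * v j = c * v i := by
  simp [ite_mul]

lemma sum_ite_succ {n : ℕ} (i : Fin n) (c : ℝ) (v : Fin n → ℝ) :
    ∑ j : Fin n, (if (i:ℕ)+1 = (j:ℕ) then c else 0) * v j
      = if h : (i:ℕ)+1 < n then c * v ⟨(i:ℕ)+1, h⟩ else 0 := by
  split_ifs with h
  · rw [Finset.sum_eq_single (⟨(i:ℕ)+1, h⟩ : Fin n)]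
    · simp
    · intro b _ hb
      have : ¬ ((i:ℕ)+1 = (b:ℕ)) := fun hc => hb (Fin.ext hc.symm)
      simp [this]
    · simp
  · apply Finset.sum_eq_zero
    intro j _
    have : ¬ ((i:ℕ)+1 = (j:ℕ)) := by have := j.isLt; omega
    simp [this]

lemma sum_ite_pred {n : ℕ} (i : Fin n) (c : ℝ) (v : Fin n → ℝ) :
    ∑ j : Fin n, (if (j:ℕ)+1 = (i:ℕ) then c else 0) * v j
      = if 1 ≤ (i:ℕ) then c * v ⟨(i:ℕ)-1, by have := i.isLt; omega⟩ else 0 := by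
  split_ifs with h
  · rw [Finset.sum_eq_single (⟨(i:ℕ)-1, by have := i.isLt; omega⟩ : Fin n)]
    · have hv : ((⟨(i:ℕ)-1, by have := i.isLt; omega⟩ : Fin n) : ℕ) + 1 = (i:ℕ) := by
        simp; omega
      rw [if_pos hv]
    · intro b _ hb
      have hb' : (b:ℕ) ≠ (i:ℕ)-1 := fun hc => hb (Fin.ext (by simpa using hc))
      have : ¬ ((b:ℕ)+1 = (i:ℕ)) := by omega
      simp [this]
    · simp
  · apply Finset.sum_eq_zero
    intro j _
    have : ¬ ((j:ℕ)+1 = (i:ℕ)) := by omega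
    simp [this]

lemma sum_ite_last {n : ℕ} (i : Fin n) (c : ℝ) (v : Fin n → ℝ) :
    ∑ j, (if i = j ∧ (i:ℕ) = n-1 then c else 0) * v j
      = if (i:ℕ) = n-1 then c * v i else 0 := by
  by_cases h : (i:ℕ) = n-1
  · simp only [h, and_true, if_pos]
    exact sum_ite_eq_self i c v
  · simp [h]

lemma marxB_mul_marxM (n : ℕ) (hn : 1 ≤ n) : marxB n * marxM n = 1 := by
  ext i k
  rw [Matrix.mul_apply, Matrix.one_apply]
  have hi := i.isLt
  have hk := k.isLt
  have hnR : (n:ℝ) ≠ 0 := by positivity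
  simp_rw [marxB_decomp n hn i, add_mul, Finset.sum_add_distrib]
  rw [sum_ite_eq_self, sum_ite_succ, sum_ite_pred, sum_ite_last]
  set v : Fin n → ℝ := fun j => marxM n j k with hv
  by_cases hlast : (i:ℕ) = n - 1
  · rw [if_pos hlast, dif_neg (by omega)]
    by_cases h1 : 1 ≤ (i:ℕ)
    · rw [if_pos h1]
      have hn2 : 2 ≤ n := by omega
      have hxn : ((i:ℕ):ℝ) + 1 = (n:ℝ) := by exact_mod_cast (show (i:ℕ)+1 = n by omega)
      by_cases hik : i = k
      · -- last row, diagonal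
        rw [if_pos hik]
        have hkv : (k:ℕ) = (i:ℕ) := by rw [hik]
        simp only [hv, marxM, of_apply, Fin.val_mk, ← Nat.cast_min, ← Nat.cast_max]
        have e1 : min (i:ℕ) (k:ℕ) = (i:ℕ) := by omega
        have e2 : max (i:ℕ) (k:ℕ) = (i:ℕ) := by omega
        have e3 : min ((i:ℕ)-1) (k:ℕ) = (i:ℕ)-1 := by omega
        have e4 : max ((i:ℕ)-1) (k:ℕ) = (i:ℕ) := by omega
        rw [e1, e2, e3, e4, Nat.cast_sub h1]
        rw [show ((i:ℕ):ℝ) = (n:ℝ) - 1 by linarith]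
        push_cast
        field_simp
        ring
      · -- last row, off-diagonal
        rw [if_neg hik]
        have hkv : (k:ℕ) < (i:ℕ) := by
          rcases lt_or_ge (k:ℕ) (i:ℕ) with h | h
          · exact h
          · exact absurd (Fin.ext (by omega : (i:ℕ) = (k:ℕ))) hik
        simp only [hv, marxM, of_apply, Fin.val_mk, ← Nat.cast_min, ← Nat.cast_max]
        have e1 : min (i:ℕ) (k:ℕ) = (k:ℕ) := by omega
        have e2 : max (i:ℕ) (k:ℕ) = (i:ℕ) := by omega
        have e3 : min ((i:ℕ)-1) (k:ℕ) = (k:ℕ) := by omega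
        have e4 : max ((i:ℕ)-1) (k:ℕ) = (i:ℕ)-1 := by omega
        rw [e1, e2, e3, e4, Nat.cast_sub h1]
        rw [show ((i:ℕ):ℝ) = (n:ℝ) - 1 by linarith]
        push_cast
        field_simp
        ring
    · -- n = 1
      rw [if_neg h1]
      have hn1 : n = 1 := by omega
      subst hn1
      have hi0 : (i:ℕ) = 0 := by omega
      have hk0 : (k:ℕ) = 0 := by omega
      rw [if_pos (Fin.ext (by omega) : i = k)]
      simp only [hv, marxM, of_apply, hi0, hk0, ← Nat.cast_min, ← Nat.cast_max]
      norm_num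
  · -- interior row
    rw [if_neg hlast, dif_pos (show (i:ℕ)+1 < n by omega)]
    by_cases h1 : 1 ≤ (i:ℕ)
    · rw [if_pos h1]
      rcases lt_trichotomy (i:ℕ) (k:ℕ) with hlt | heq | hgt
      · rw [if_neg (show ¬ i = k by rintro rfl; omega)]
        simp only [hv, marxM, of_apply, Fin.val_mk, ← Nat.cast_min, ← Nat.cast_max]
        have e1 : min (i:ℕ) (k:ℕ) = (i:ℕ) := by omega
        have e2 : max (i:ℕ) (k:ℕ) = (k:ℕ) := by omega
        have e3 : min ((i:ℕ)+1) (k:ℕ) = (i:ℕ)+1 := by omega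
        have e4 : max ((i:ℕ)+1) (k:ℕ) = (k:ℕ) := by omega
        have e5 : min ((i:ℕ)-1) (k:ℕ) = (i:ℕ)-1 := by omega
        have e6 : max ((i:ℕ)-1) (k:ℕ) = (k:ℕ) := by omega
        rw [e1, e2, e3, e4, e5, e6, Nat.cast_sub h1]
        push_cast
        field_simp
        ring
      · rw [if_pos (Fin.ext heq : i = k)]
        have hkc : ((k:ℕ):ℝ) = ((i:ℕ):ℝ) := by exact_mod_cast heq.symm
        simp only [hv, marxM, of_apply, Fin.val_mk, ← Nat.cast_min, ← Nat.cast_max]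
        have e1 : min (i:ℕ) (k:ℕ) = (i:ℕ) := by omega
        have e2 : max (i:ℕ) (k:ℕ) = (i:ℕ) := by omega
        have e3 : min ((i:ℕ)+1) (k:ℕ) = (i:ℕ) := by omega
        have e4 : max ((i:ℕ)+1) (k:ℕ) = (i:ℕ)+1 := by omega
        have e5 : min ((i:ℕ)-1) (k:ℕ) = (i:ℕ)-1 := by omega
        have e6 : max ((i:ℕ)-1) (k:ℕ) = (i:ℕ) := by omega
        rw [e1, e2, e3, e4, e5, e6, Nat.cast_sub h1]
        push_cast
        field_simp
        ring
      · rw [if_neg (show ¬ i = k by rintro rfl; omega)]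
        simp only [hv, marxM, of_apply, Fin.val_mk, ← Nat.cast_min, ← Nat.cast_max]
        have e1 : min (i:ℕ) (k:ℕ) = (k:ℕ) := by omega
        have e2 : max (i:ℕ) (k:ℕ) = (i:ℕ) := by omega
        have e3 : min ((i:ℕ)+1) (k:ℕ) = (k:ℕ) := by omega
        have e4 : max ((i:ℕ)+1) (k:ℕ) = (i:ℕ)+1 := by omega
        have e5 : min ((i:ℕ)-1) (k:ℕ) = (k:ℕ) := by omega
        have e6 : max ((i:ℕ)-1) (k:ℕ) = (i:ℕ)-1 := by omega
        rw [e1, e2, e3, e4, e5, e6, Nat.cast_sub h1]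
        push_cast
        field_simp
        ring
    · -- first row
      rw [if_neg h1]
      have hi0 : (i:ℕ) = 0 := by omega
      by_cases hik : i = k
      · rw [if_pos hik]
        have hk0 : (k:ℕ) = 0 := by rw [← hik]; exact hi0
        simp only [hv, marxM, of_apply, Fin.val_mk, ← Nat.cast_min, ← Nat.cast_max]
        have e1 : min (i:ℕ) (k:ℕ) = 0 := by omega
        have e2 : max (i:ℕ) (k:ℕ) = 0 := by omega
        have e3 : min ((i:ℕ)+1) (k:ℕ) = 0 := by omega
        have e4 : max ((i:ℕ)+1) (k:ℕ) = 1 := by omega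
        rw [e1, e2, e3, e4]
        push_cast
        field_simp
        ring
      · rw [if_neg hik]
        have hk1 : 1 ≤ (k:ℕ) := by
          rcases Nat.eq_zero_or_pos (k:ℕ) with h | h
          · exact absurd (Fin.ext (by omega) : i = k) hik
          · exact h
        simp only [hv, marxM, of_apply, Fin.val_mk, ← Nat.cast_min, ← Nat.cast_max]
        have e1 : min (i:ℕ) (k:ℕ) = 0 := by omega
        have e2 : max (i:ℕ) (k:ℕ) = (k:ℕ) := by omega
        have e3 : min ((i:ℕ)+1) (k:ℕ) = 1 := by omega
        have e4 : max ((i:ℕ)+1) (k:ℕ) = (k:ℕ) := by omega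
        rw [e1, e2, e3, e4]
        push_cast
        field_simp
        ring

lemma marxB_inv (n : ℕ) (hn : 1 ≤ n) : (marxB n)⁻¹ = marxM n :=
  Matrix.inv_eq_right_inv (marxB_mul_marxM n hn)

/-- for `n ≥ 2` every diagonal entry of `B⁻¹` is strictly greater
than `1/2`; moreover for `n = 1` the unique entry of `B⁻¹` equals `1/2`. -/
theorem statement9 (n : ℕ) (hn : 2 ≤ n) :
    (∀ i, 1 / 2 < (marxB n)⁻¹ i i) ∧ (∀ i : Fin 1, (marxB 1)⁻¹ i i = 1 / 2) := by
  constructor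
  · intro i
    rw [marxB_inv n (by omega)]
    simp only [marxM, of_apply, min_self, max_self]
    have hi : (i:ℕ) + 1 ≤ n := i.isLt
    have hiR : ((i:ℕ):ℝ) + 1 ≤ (n:ℝ) := by exact_mod_cast hi
    have hi0 : (0:ℝ) ≤ ((i:ℕ):ℝ) := Nat.cast_nonneg _
    have hnR : (0:ℝ) < 2 * (n:ℝ) := by positivity
    have hn2 : (2:ℝ) ≤ (n:ℝ) := by exact_mod_cast hn
    rw [lt_div_iff₀ hnR]
    nlinarith [mul_nonneg hi0 (by linarith : (0:ℝ) ≤ 2*(n:ℝ) - 2 - ((i:ℕ):ℝ))]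
  · intro i
    rw [marxB_inv 1 le_rfl]
    fin_cases i
    simp only [marxM, of_apply]
    norm_num


end
end

section
/- Let n ≥ 1, ℓ > 0, c > 0, and let F = diag(f₁, …, fₙ) with fᵢ > 0. Then there exists an invertible real matrix N ∈ ℝ^{n×n} with Nᵀ·N = Iₙ + √F·B·√F such that A₀ is similar over ℝ to the block-diagonal matrix ω₀ · blockdiag( 0_{n×n}, [[0, 1],[−1, 0]], [[0_{n×n}, Nᵀ],[−N, 0_{n×n}]] ). -/
open Matrix Polynomial

noncomputable section

/-- The `n × (n+1)` difference matrix `Σ`. -/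
def marxSigma (n : ℕ) : Matrix (Fin n) (Fin (n + 1)) ℝ :=
  Matrix.of fun i j =>
    if (j : ℕ) = (i : ℕ) then 1 else if (j : ℕ) = (i : ℕ) + 1 then -1 else 0

/-- `J_{n+1} = diag(1, …, 1, n)`. -/
def marxJ (n : ℕ) : Matrix (Fin (n + 1)) (Fin (n + 1)) ℝ :=
  Matrix.diagonal fun j => if (j : ℕ) = n then (n : ℝ) else 1

/-- `J_{-1} = diag(1, …, 1, -1)` of size `n+1`. -/
def marxJm (n : ℕ) : Matrix (Fin (n + 1)) (Fin (n + 1)) ℝ :=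
  Matrix.diagonal fun j => if (j : ℕ) = n then (-1 : ℝ) else 1

/-- The `(3n+2) × (3n+2)` state transition matrix `A₀` of the Marx circuit,
indexed by `(Fin n ⊕ Fin (n+1)) ⊕ Fin (n+1)`, the `2n+1` voltages followed by
the `n+1` currents. -/
def marxA0 (n : ℕ) (ℓ c : ℝ) (f : Fin n → ℝ) :
    Matrix ((Fin n ⊕ Fin (n + 1)) ⊕ Fin (n + 1))
      ((Fin n ⊕ Fin (n + 1)) ⊕ Fin (n + 1)) ℝ :=
  Matrix.fromBlocks 0
    (Matrix.fromRows (-(1 / c) • (Matrix.diagonal f * marxSigma n * marxJm n))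
      ((1 / c) • (1 : Matrix (Fin (n + 1)) (Fin (n + 1)) ℝ)))
    (Matrix.fromCols ((1 / ℓ) • ((marxJ n)⁻¹ * marxJm n * (marxSigma n)ᵀ))
      (-(1 / ℓ) • (1 : Matrix (Fin (n + 1)) (Fin (n + 1)) ℝ)))
    0



-- helper add/smul lemmas for fromRows/fromColumns
lemma smul_fromRows {R : Type*} [SMul R ℝ] {m₁ m₂ n : Type*} (a : R)
    (A : Matrix m₁ n ℝ) (B : Matrix m₂ n ℝ) :
    a • Matrix.fromRows A B = Matrix.fromRows (a • A) (a • B) := by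
  ext (i | i) j <;> rfl

lemma smul_fromColumns {R : Type*} [SMul R ℝ] {m n₁ n₂ : Type*} (a : R)
    (A : Matrix m n₁ ℝ) (B : Matrix m n₂ ℝ) :
    a • Matrix.fromCols A B = Matrix.fromCols (a • A) (a • B) := by
  ext i (j | j) <;> rfl

lemma fromRows_add {m₁ m₂ n : Type*} (A C : Matrix m₁ n ℝ) (B D : Matrix m₂ n ℝ) :
    Matrix.fromRows A B + Matrix.fromRows C D = Matrix.fromRows (A + C) (B + D) := by
  ext (i | i) j <;> rfl

lemma fromColumns_add {m n₁ n₂ : Type*} (A C : Matrix m n₁ ℝ) (B D : Matrix m n₂ ℝ) :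
    Matrix.fromCols A B + Matrix.fromCols C D = Matrix.fromCols (A + C) (B + D) := by
  ext i (j | j) <;> rfl


lemma fromRows_fromBlocks {m₁ m₂ m₃ m₄ n₁ n₂ : Type*}
    (A : Matrix m₁ n₁ ℝ) (B : Matrix m₁ n₂ ℝ) (C : Matrix m₂ n₁ ℝ) (D : Matrix m₂ n₂ ℝ)
    (E : Matrix m₃ n₁ ℝ) (F : Matrix m₃ n₂ ℝ) (G : Matrix m₄ n₁ ℝ) (H : Matrix m₄ n₂ ℝ) :
    Matrix.fromRows (Matrix.fromBlocks A B C D) (Matrix.fromBlocks E F G H) =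
      Matrix.fromBlocks (Matrix.fromRows A C) (Matrix.fromRows B D)
        (Matrix.fromRows E G) (Matrix.fromRows F H) := by
  ext i j
  rcases i with (i | i) | (i | i) <;> rcases j with j | j <;> rfl

lemma fromRows_zero_fromColumns {m₁ m₂ n₁ n₂ : Type*}
    (C : Matrix m₂ n₁ ℝ) (D : Matrix m₂ n₂ ℝ) :
    Matrix.fromRows (0 : Matrix m₁ (n₁ ⊕ n₂) ℝ) (Matrix.fromCols C D) =
      Matrix.fromBlocks 0 0 C D := by
  ext i j
  rcases i with i | i <;> rcases j with j | j <;> rfl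

lemma fromRows_fromColumns_zero {m₁ m₂ n₁ n₂ : Type*}
    (A : Matrix m₁ n₁ ℝ) (B : Matrix m₁ n₂ ℝ) :
    Matrix.fromRows (Matrix.fromCols A B) (0 : Matrix m₂ (n₁ ⊕ n₂) ℝ) =
      Matrix.fromBlocks A B 0 0 := by
  ext i j
  rcases i with i | i <;> rcases j with j | j <;> rfl

lemma fromColumns_zero_fromRows {m₁ m₂ n₁ n₂ : Type*}
    (B : Matrix m₁ n₂ ℝ) (D : Matrix m₂ n₂ ℝ) :
    Matrix.fromCols (0 : Matrix (m₁ ⊕ m₂) n₁ ℝ) (Matrix.fromRows B D) =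
      Matrix.fromBlocks 0 B 0 D := by
  ext i j
  rcases i with i | i <;> rcases j with j | j <;> rfl

lemma fromColumns_fromRows_zero {m₁ m₂ n₁ n₂ : Type*}
    (A : Matrix m₁ n₁ ℝ) (C : Matrix m₂ n₁ ℝ) :
    Matrix.fromCols (Matrix.fromRows A C) (0 : Matrix (m₁ ⊕ m₂) n₂ ℝ) =
      Matrix.fromBlocks A 0 C 0 := by
  ext i j
  rcases i with i | i <;> rcases j with j | j <;> rfl


lemma fromColumns_fromBlocks {m₁ m₂ n₁ n₂ n₃ n₄ : Type*}
    (A : Matrix m₁ n₁ ℝ) (B : Matrix m₁ n₂ ℝ) (C : Matrix m₂ n₁ ℝ) (D : Matrix m₂ n₂ ℝ)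
    (E : Matrix m₁ n₃ ℝ) (F : Matrix m₁ n₄ ℝ) (G : Matrix m₂ n₃ ℝ) (H : Matrix m₂ n₄ ℝ) :
    Matrix.fromCols (Matrix.fromBlocks A B C D) (Matrix.fromBlocks E F G H) =
      Matrix.fromBlocks (Matrix.fromCols A B) (Matrix.fromCols E F)
        (Matrix.fromCols C D) (Matrix.fromCols G H) := by
  ext i j
  rcases i with i | i <;> rcases j with (j | j) | (j | j) <;> rfl

lemma core (n : ℕ) (c ℓ ω₀ sc sci : ℝ)
    (K : Matrix (Fin n) (Fin (n+1)) ℝ) (zr : Matrix (Fin 1) (Fin (n+1)) ℝ)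
    (E Ei : Matrix (Fin n) (Fin n) ℝ) (D Di : Matrix (Fin (n+1)) (Fin (n+1)) ℝ)
    (hEEi : E * Ei = 1) (hEiE : Ei * E = 1) (hDDi : D * Di = 1) (hDiD : Di * D = 1)
    (hz : K * zrᵀ = 0) (hzz : zr * zrᵀ = 1)
    (hG : (K * Kᵀ).PosDef)
    (h1 : ω₀ * sc = 1 / c) (h2 : sc * (1 / ℓ) = ω₀) (h3 : sc * sci = 1) :
    ∃ N : Matrix (Fin n) (Fin n) ℝ, IsUnit N.det ∧ Nᵀ * N = 1 + K * Kᵀ ∧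
    ∃ (P : Matrix (Fin n ⊕ ((Fin 1 ⊕ Fin 1) ⊕ (Fin n ⊕ Fin n))) ((Fin n ⊕ Fin (n+1)) ⊕ Fin (n+1)) ℝ)
      (Q : Matrix ((Fin n ⊕ Fin (n+1)) ⊕ Fin (n+1)) (Fin n ⊕ ((Fin 1 ⊕ Fin 1) ⊕ (Fin n ⊕ Fin n))) ℝ),
      P * Q = 1 ∧
      P * (Matrix.fromBlocks 0
            (Matrix.fromRows (-(1 / c) • (E * K * D)) ((1 / c) • 1))
            (Matrix.fromCols ((1 / ℓ) • (Di * Kᵀ * Ei)) (-(1 / ℓ) • 1)) 0 :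
            Matrix ((Fin n ⊕ Fin (n+1)) ⊕ Fin (n+1)) ((Fin n ⊕ Fin (n+1)) ⊕ Fin (n+1)) ℝ) =
        (ω₀ • Matrix.fromBlocks 0 0 0
          (Matrix.fromBlocks (Matrix.fromBlocks 0 1 (-1) 0) 0 0
            (Matrix.fromBlocks 0 Nᵀ (-N) 0)) :
          Matrix (Fin n ⊕ ((Fin 1 ⊕ Fin 1) ⊕ (Fin n ⊕ Fin n)))
            (Fin n ⊕ ((Fin 1 ⊕ Fin 1) ⊕ (Fin n ⊕ Fin n))) ℝ) * P := by
  have psd := hG.posSemidef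
  open scoped MatrixOrder in set Gh : Matrix (Fin n) (Fin n) ℝ := CFC.sqrt (K * Kᵀ) with hGhdef
  open scoped MatrixOrder in have hGh : Gh * Gh = K * Kᵀ := CFC.sqrt_mul_sqrt_self _ psd.nonneg
  have hGhsym : Ghᵀ = Gh := by
    open scoped MatrixOrder in have := (Matrix.nonneg_iff_posSemidef.mp (CFC.sqrt_nonneg (K * Kᵀ))).isHermitian
    rwa [Matrix.IsHermitian, Matrix.conjTranspose_eq_transpose_of_trivial] at this
  have hGhu : IsUnit Gh.det := by
    have h : Gh.det * Gh.det = (K * Kᵀ).det := by rw [← Matrix.det_mul, hGh]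
    have hd := hG.det_pos
    refine isUnit_iff_ne_zero.mpr (fun h0 => ?_)
    rw [h0, mul_zero] at h; exact absurd h.symm (ne_of_gt hd)
  set Ghi := Gh⁻¹ with hGhidef
  have hGhGhi : Gh * Ghi = 1 := Matrix.mul_nonsing_inv Gh hGhu
  have hGhiGh : Ghi * Gh = 1 := Matrix.nonsing_inv_mul Gh hGhu
  have hG1 : (1 + K * Kᵀ).PosDef := Matrix.PosDef.one.add_posSemidef psd
  open scoped MatrixOrder in set N : Matrix (Fin n) (Fin n) ℝ := CFC.sqrt (1 + K * Kᵀ) with hNdef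
  open scoped MatrixOrder in have hNN : N * N = 1 + K * Kᵀ := CFC.sqrt_mul_sqrt_self _ hG1.posSemidef.nonneg
  have hNsym : Nᵀ = N := by
    open scoped MatrixOrder in have := (Matrix.nonneg_iff_posSemidef.mp (CFC.sqrt_nonneg (1 + K * Kᵀ))).isHermitian
    rwa [Matrix.IsHermitian, Matrix.conjTranspose_eq_transpose_of_trivial] at this
  have hNu : IsUnit N.det := by
    have h : N.det * N.det = (1 + K * Kᵀ).det := by rw [← Matrix.det_mul, hNN]
    have hd := hG1.det_pos
    refine isUnit_iff_ne_zero.mpr (fun h0 => ?_)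
    rw [h0, mul_zero] at h; exact absurd h.symm (ne_of_gt hd)
  set Ni := N⁻¹ with hNidef
  have hNNi : N * Ni = 1 := Matrix.mul_nonsing_inv N hNu
  have hNiN : Ni * N = 1 := Matrix.nonsing_inv_mul N hNu
  -- cancellation lemmas in right-associated form
  have cEiE : ∀ {m : Type} (X : Matrix (Fin n) m ℝ), Ei * (E * X) = X := fun X => by
    rw [← Matrix.mul_assoc, hEiE, Matrix.one_mul]
  have cEEi : ∀ {m : Type} (X : Matrix (Fin n) m ℝ), E * (Ei * X) = X := fun X => by
    rw [← Matrix.mul_assoc, hEEi, Matrix.one_mul]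
  have cDDi : ∀ {m : Type} (X : Matrix (Fin (n+1)) m ℝ), D * (Di * X) = X := fun X => by
    rw [← Matrix.mul_assoc, hDDi, Matrix.one_mul]
  have cDiD : ∀ {m : Type} (X : Matrix (Fin (n+1)) m ℝ), Di * (D * X) = X := fun X => by
    rw [← Matrix.mul_assoc, hDiD, Matrix.one_mul]
  have cNNi : ∀ {m : Type} (X : Matrix (Fin n) m ℝ), N * (Ni * X) = X := fun X => by
    rw [← Matrix.mul_assoc, hNNi, Matrix.one_mul]
  have cNiN : ∀ {m : Type} (X : Matrix (Fin n) m ℝ), Ni * (N * X) = X := fun X => by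
    rw [← Matrix.mul_assoc, hNiN, Matrix.one_mul]
  have cGhGhi : ∀ {m : Type} (X : Matrix (Fin n) m ℝ), Gh * (Ghi * X) = X := fun X => by
    rw [← Matrix.mul_assoc, hGhGhi, Matrix.one_mul]
  have cGhiGh : ∀ {m : Type} (X : Matrix (Fin n) m ℝ), Ghi * (Gh * X) = X := fun X => by
    rw [← Matrix.mul_assoc, hGhiGh, Matrix.one_mul]
  have hGGhi : K * (Kᵀ * Ghi) = Gh := by
    rw [← Matrix.mul_assoc, ← hGh, Matrix.mul_assoc, hGhGhi, Matrix.mul_one]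
  have hGhiG : Ghi * (K * Kᵀ) = Gh := by
    rw [← hGh, ← Matrix.mul_assoc, hGhiGh, Matrix.one_mul]
  have cKKtGhi : ∀ {m : Type} (X : Matrix (Fin n) m ℝ), K * (Kᵀ * (Ghi * X)) = Gh * X := fun X => by
    rw [← Matrix.mul_assoc, ← Matrix.mul_assoc, Matrix.mul_assoc K, hGGhi]
  have cGhiKKt : ∀ {m : Type} (X : Matrix (Fin n) m ℝ),
      Ghi * (K * (Kᵀ * X)) = Gh * X := fun X => by
    rw [← Matrix.mul_assoc, ← Matrix.mul_assoc, Matrix.mul_assoc Ghi, hGhiG]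
  have hzr : zr * Kᵀ = 0 := by
    have := congrArg Matrix.transpose hz
    simpa [Matrix.transpose_mul] using this
  have czrKt : ∀ {m : Type} (X : Matrix (Fin n) m ℝ), zr * (Kᵀ * X) = 0 := fun X => by
    rw [← Matrix.mul_assoc, hzr, Matrix.zero_mul]
  have hsplitN : ∀ {m : Type} (X : Matrix (Fin n) m ℝ),
      N * (Ghi * X) = Ni * (Gh * X) + Ni * (Ghi * X) := fun X => by
    have hGGhi' : (K * Kᵀ) * Ghi = Gh := by
      rw [← hGh, Matrix.mul_assoc, hGhGhi, Matrix.mul_one]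
    have hN' : N * Ghi = Ni * Gh + Ni * Ghi := by
      have h6 : N * Ghi = Ni * ((N * N) * Ghi) := by
        rw [← Matrix.mul_assoc, ← Matrix.mul_assoc, hNiN, Matrix.one_mul]
      rw [h6, hNN, Matrix.add_mul, Matrix.one_mul, Matrix.mul_add, hGGhi', add_comm]
    rw [← Matrix.mul_assoc, hN', Matrix.add_mul, Matrix.mul_assoc, Matrix.mul_assoc]
  have hA1 : Ni * Ni + Ni * (K * (Kᵀ * Ni)) = 1 := by
    have h5 : Ni * ((N * N) * Ni) = 1 := by
      rw [Matrix.mul_assoc N, hNNi, Matrix.mul_one, hNiN]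
    rw [hNN] at h5
    rw [← h5, Matrix.add_mul, Matrix.one_mul, Matrix.mul_add, ← Matrix.mul_assoc K,
      Matrix.mul_assoc]
  have hA2 : Ni * (K * (Kᵀ * Ni)) + Ni * Ni = 1 := by rw [add_comm]; exact hA1
  have cGhGh : ∀ {m : Type} (X : Matrix (Fin n) m ℝ), Gh * (Gh * X) = K * (Kᵀ * X) := fun X => by
    rw [← Matrix.mul_assoc, hGh, Matrix.mul_assoc]
  have h1' : sc * ω₀ = 1 / c := by rw [mul_comm]; exact h1
  have h2' : 1 / ℓ * sc = ω₀ := by rw [mul_comm]; exact h2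
  have h3' : sci * sc = 1 := by rw [mul_comm]; exact h3
  refine ⟨N, hNu, by rw [hNsym, hNN], ?_⟩
  refine ⟨Matrix.fromBlocks
      (Matrix.fromCols (Ni * Ei) (Ni * (K * D)))
      0
      (Matrix.fromRows
        (Matrix.fromRows (Matrix.fromCols 0 (zr * D)) 0)
        (Matrix.fromRows
          (Matrix.fromCols (-(Ni * (Gh * Ei))) (Ni * (Ghi * (K * D)))) 0))
      (Matrix.fromRows
        (Matrix.fromRows 0 (sc • (zr * D)))
        (Matrix.fromRows 0 (sc • (Ghi * (K * D))))),
    Matrix.fromBlocks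
      (Matrix.fromRows (E * Ni) (Di * (Kᵀ * Ni)))
      (Matrix.fromCols
        (Matrix.fromCols (Matrix.fromRows 0 (Di * zrᵀ)) 0)
        (Matrix.fromCols
          (Matrix.fromRows (-(E * (Gh * Ni))) (Di * (Kᵀ * (Ghi * Ni)))) 0))
      0
      (Matrix.fromCols
        (Matrix.fromCols 0 (sci • (Di * zrᵀ)))
        (Matrix.fromCols 0 (sci • (Di * (Kᵀ * Ghi))))),
    ?_, ?_⟩
  · simp only [Matrix.fromBlocks_multiply, Matrix.fromBlocks_mul_fromRows,
      Matrix.fromCols_mul_fromBlocks, Matrix.fromRows_mul, Matrix.mul_fromCols,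
      Matrix.fromCols_mul_fromRows, Matrix.smul_mul, Matrix.mul_smul,
      Matrix.mul_one, Matrix.one_mul, Matrix.mul_zero, Matrix.zero_mul, smul_zero,
      zero_add, add_zero, Matrix.neg_mul, Matrix.mul_neg, neg_neg, neg_smul, smul_neg,
      smul_smul, smul_add, one_smul, Matrix.mul_assoc, cEiE, cEEi, cDDi, cDiD, cNNi, cNiN,
      cGhGhi, cGhiGh, cKKtGhi, cGhiKKt, czrKt, hz, hzz, hzr, hA1, hA2, cGhGh, hGhGhi, hGhiGh, hNNi, hNiN, hEEi, hEiE, hDDi, hDiD, fromColumns_fromBlocks,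
      h1, h2, h3, h1', h2', h3', neg_zero, Matrix.fromRows_neg, Matrix.fromCols_neg,
      smul_fromRows, smul_fromColumns, fromRows_add, fromColumns_add,
      Matrix.fromRows_zero, Matrix.fromCols_zero,
      Matrix.fromRows_fromCols_eq_fromBlocks, Matrix.fromCols_fromRows_eq_fromBlocks,
      fromRows_fromBlocks, fromRows_zero_fromColumns, fromRows_fromColumns_zero,
      fromColumns_zero_fromRows, fromColumns_fromRows_zero,
      Matrix.fromBlocks_smul, Matrix.fromBlocks_add, Matrix.fromBlocks_one,
      neg_add_cancel, add_neg_cancel]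
  · simp only [Matrix.fromBlocks_multiply, Matrix.fromBlocks_mul_fromRows,
      Matrix.fromCols_mul_fromBlocks, Matrix.fromRows_mul, Matrix.mul_fromCols,
      Matrix.fromCols_mul_fromRows, Matrix.smul_mul, Matrix.mul_smul,
      Matrix.mul_one, Matrix.one_mul, Matrix.mul_zero, Matrix.zero_mul, smul_zero,
      zero_add, add_zero, Matrix.neg_mul, Matrix.mul_neg, neg_neg, neg_smul, smul_neg,
      smul_smul, smul_add, one_smul, Matrix.mul_assoc, cEiE, cEEi, cDDi, cDiD, cNNi, cNiN,
      cGhGhi, cGhiGh, cKKtGhi, cGhiKKt, czrKt, hz, hzz, hzr, hsplitN, hNsym, cGhGh, hGhGhi, hGhiGh, hNNi, hNiN, hEEi, hEiE, hDDi, hDiD, fromColumns_fromBlocks,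
      h1, h2, h3, h1', h2', h3', neg_zero, Matrix.fromRows_neg, Matrix.fromCols_neg,
      smul_fromRows, smul_fromColumns, fromRows_add, fromColumns_add,
      Matrix.fromRows_zero, Matrix.fromCols_zero,
      Matrix.fromRows_fromCols_eq_fromBlocks, Matrix.fromCols_fromRows_eq_fromBlocks,
      fromRows_fromBlocks, fromRows_zero_fromColumns, fromRows_fromColumns_zero,
      fromColumns_zero_fromRows, fromColumns_fromRows_zero,
      Matrix.fromBlocks_smul, Matrix.fromBlocks_add, Matrix.fromBlocks_one,
      neg_add_cancel, add_neg_cancel]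

lemma sigma_dot (n : ℕ) (i : Fin n) (v : Fin (n+1) → ℝ) :
    ∑ j, marxSigma n i j * v j = v i.castSucc - v i.succ := by
  have h : ∀ j, marxSigma n i j * v j =
      (if j = i.castSucc then v j else 0) - (if j = i.succ then v j else 0) := by
    intro j
    simp only [marxSigma, Matrix.of_apply, Fin.ext_iff, Fin.coe_castSucc, Fin.val_succ]
    split_ifs <;> first | ring1 | (exfalso; omega)
  simp only [h, Finset.sum_sub_distrib, Finset.sum_ite_eq', Finset.mem_univ, if_true]

lemma sigma_col (n : ℕ) (y : Fin n → ℝ) (k : Fin n) :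
    ∑ i, y i * marxSigma n i k.castSucc =
      y k - (if h : 0 < (k:ℕ) then y ⟨(k:ℕ)-1, by omega⟩ else 0) := by
  have h : ∀ i, y i * marxSigma n i k.castSucc =
      (if i = k then y i else 0) -
        (if h' : 0 < (k:ℕ) then (if i = (⟨(k:ℕ)-1, by omega⟩ : Fin n) then y i else 0) else 0) := by
    intro i
    simp only [marxSigma, Matrix.of_apply, Fin.ext_iff, Fin.coe_castSucc, Fin.val_succ]
    split_ifs <;> first | ring1 | (exfalso; omega)
  rw [Finset.sum_congr rfl (fun i _ => h i), Finset.sum_sub_distrib]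
  by_cases hk : 0 < (k:ℕ) <;>
    simp [hk, Finset.sum_ite_eq', Finset.mem_univ]

lemma sigma_diag_sigmaT (n : ℕ) (hn : 1 ≤ n) :
    marxSigma n * Matrix.diagonal (fun j : Fin (n+1) => if (j:ℕ) = n then ((n:ℝ))⁻¹ else 1) *
      (marxSigma n)ᵀ = marxB n := by
  have hn0 : (n : ℝ) ≠ 0 := Nat.cast_ne_zero.mpr (by omega)
  ext i k
  have hi := i.is_lt
  have hk := k.is_lt
  rw [Matrix.mul_assoc, Matrix.mul_apply]
  simp only [Matrix.diagonal_mul, Matrix.transpose_apply]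
  rw [sigma_dot n i (fun j => (if ((j : Fin (n+1)):ℕ) = n then ((n:ℝ))⁻¹ else 1) * marxSigma n k j)]
  simp only [marxSigma, marxB, Matrix.of_apply, Fin.coe_castSucc, Fin.val_succ, Fin.ext_iff]
  push_cast [Nat.sub_add_cancel hn]
  split_ifs <;> first | ring1 | (exfalso; omega) | (field_simp; ring1) | field_simp

lemma sigma_vecMul_inj (n : ℕ) (y : Fin n → ℝ)
    (h : ∀ j, ∑ i, y i * marxSigma n i j = 0) : y = 0 := by
  have key : ∀ m (hm : m < n), y ⟨m, hm⟩ = 0 := by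
    intro m
    induction m with
    | zero =>
      intro hm
      have h0 := h (Fin.castSucc ⟨0, hm⟩)
      rw [sigma_col] at h0
      simpa using h0
    | succ p ih =>
      intro hm
      have hp : p < n := by omega
      have h0 := h (Fin.castSucc ⟨p+1, hm⟩)
      rw [sigma_col] at h0
      simp only [Nat.add_sub_cancel, dif_pos (Nat.succ_pos p)] at h0
      have h0' : y ⟨p + 1, hm⟩ - y ⟨p, hp⟩ = 0 := h0
      have := ih hp
      linarith
  funext k
  have := key k k.is_lt
  simpa [Fin.eta] using this


lemma inst (n : ℕ) (hn : 1 ≤ n) (f : Fin n → ℝ) (hf : ∀ i, 0 < f i) :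
    ∃ (K : Matrix (Fin n) (Fin (n+1)) ℝ) (zr : Matrix (Fin 1) (Fin (n+1)) ℝ)
      (rF rFi : Matrix (Fin n) (Fin n) ℝ) (Dw Dwi : Matrix (Fin (n+1)) (Fin (n+1)) ℝ),
      rF = Matrix.diagonal (fun i => Real.sqrt (f i)) ∧
      rF * rFi = 1 ∧ rFi * rF = 1 ∧ Dw * Dwi = 1 ∧ Dwi * Dw = 1 ∧
      K * zrᵀ = 0 ∧ zr * zrᵀ = 1 ∧ (K * Kᵀ).PosDef ∧
      K * Kᵀ = rF * marxB n * rF ∧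
      Matrix.diagonal f * marxSigma n * marxJm n = rF * K * Dw ∧
      (marxJ n)⁻¹ * marxJm n * (marxSigma n)ᵀ = Dwi * Kᵀ * rFi := by
  have hnn : 0 < n := hn
  have hn0 : (n : ℝ) ≠ 0 := Nat.cast_ne_zero.mpr (by omega)
  have hnpos : (0:ℝ) < (n:ℝ) := by exact_mod_cast hnn
  have hsq : Real.sqrt n * Real.sqrt n = n := Real.mul_self_sqrt hnpos.le
  have hsqn : Real.sqrt n ≠ 0 := by positivity
  have hsf : ∀ i, Real.sqrt (f i) ≠ 0 := fun i => by have := hf i; positivity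
  have h2n : (2*(n:ℝ)) ≠ 0 := by positivity
  have hsq2 : Real.sqrt (2*n) * Real.sqrt (2*n) = 2*n := Real.mul_self_sqrt (by positivity)
  have hsq2n : Real.sqrt (2*n) ≠ 0 := by positivity
  set rF : Matrix (Fin n) (Fin n) ℝ := Matrix.diagonal (fun i => Real.sqrt (f i)) with hrF
  set rFi : Matrix (Fin n) (Fin n) ℝ := Matrix.diagonal (fun i => (Real.sqrt (f i))⁻¹) with hrFi
  set Jhi : Matrix (Fin (n+1)) (Fin (n+1)) ℝ :=
    Matrix.diagonal (fun j => if (j:ℕ) = n then (Real.sqrt n)⁻¹ else 1) with hJhi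
  set Dw : Matrix (Fin (n+1)) (Fin (n+1)) ℝ :=
    Matrix.diagonal (fun j => if (j:ℕ) = n then -Real.sqrt n else 1) with hDw
  set Dwi : Matrix (Fin (n+1)) (Fin (n+1)) ℝ :=
    Matrix.diagonal (fun j => if (j:ℕ) = n then -(Real.sqrt n)⁻¹ else 1) with hDwi
  set K : Matrix (Fin n) (Fin (n+1)) ℝ := rF * (marxSigma n * Jhi) with hK
  set zr : Matrix (Fin 1) (Fin (n+1)) ℝ :=
    Matrix.of (fun _ j => (if (j:ℕ) = n then Real.sqrt n else 1) / Real.sqrt (2*n)) with hzrdef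
  have diag_one : ∀ (d : Fin (n+1) → ℝ), (∀ j, d j = 1) → Matrix.diagonal d = 1 := by
    intro d hd
    rw [show d = fun _ => (1:ℝ) from funext hd, Matrix.diagonal_one]
  have diag_one' : ∀ (d : Fin n → ℝ), (∀ j, d j = 1) → Matrix.diagonal d = 1 := by
    intro d hd
    rw [show d = fun _ => (1:ℝ) from funext hd, Matrix.diagonal_one]
  have hEEi : rF * rFi = 1 := by
    rw [hrF, hrFi, Matrix.diagonal_mul_diagonal]
    exact diag_one' _ (fun i => mul_inv_cancel₀ (hsf i))
  have hEiE : rFi * rF = 1 := by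
    rw [hrF, hrFi, Matrix.diagonal_mul_diagonal]
    exact diag_one' _ (fun i => inv_mul_cancel₀ (hsf i))
  have hDDi : Dw * Dwi = 1 := by
    rw [hDw, hDwi, Matrix.diagonal_mul_diagonal]
    refine diag_one _ (fun j => ?_)
    by_cases h : (j:ℕ) = n <;> simp [h, mul_inv_cancel₀ hsqn]
  have hDiD : Dwi * Dw = 1 := by
    rw [hDw, hDwi, Matrix.diagonal_mul_diagonal]
    refine diag_one _ (fun j => ?_)
    by_cases h : (j:ℕ) = n <;> simp [h, inv_mul_cancel₀ hsqn]
  -- K * zrᵀ = 0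
  have hJz : Jhi * zrᵀ = Matrix.of (fun _ _ => (Real.sqrt (2*n))⁻¹) := by
    ext j k
    rw [hJhi, Matrix.diagonal_mul]
    simp only [Matrix.transpose_apply, hzrdef, Matrix.of_apply]
    by_cases h : (j:ℕ) = n <;> simp [h, div_eq_mul_inv] <;> field_simp <;> simp
  have hz : K * zrᵀ = 0 := by
    rw [hK, Matrix.mul_assoc, Matrix.mul_assoc, hJz]
    have : marxSigma n * (Matrix.of (fun _ _ => (Real.sqrt (2*n))⁻¹) :
        Matrix (Fin (n+1)) (Fin 1) ℝ) = 0 := by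
      ext i k
      rw [Matrix.mul_apply]
      simp only [Matrix.of_apply]
      rw [sigma_dot n i (fun _ => (Real.sqrt (2*n))⁻¹)]
      simp
    rw [this, Matrix.mul_zero]
  -- zr * zrᵀ = 1
  have hzz : zr * zrᵀ = 1 := by
    ext k k'
    rw [Matrix.mul_apply]
    have hptw : ∀ j : Fin (n+1), zr k j * zrᵀ j k' =
        1/(2*(n:ℝ)) + (if j = Fin.last n then ((n:ℝ)-1)/(2*n) else 0) := by
      intro j
      simp only [Matrix.transpose_apply, hzrdef, Matrix.of_apply]
      by_cases h : (j:ℕ) = n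
      · have hl : j = Fin.last n := Fin.ext (by simpa using h)
        rw [if_pos h, if_pos hl, div_mul_div_comm, hsq, hsq2]
        field_simp <;> ring
      · have hl : ¬ j = Fin.last n := fun e => h (by rw [e]; simp)
        rw [if_neg h, if_neg hl, div_mul_div_comm, hsq2, add_zero]
        norm_num
    rw [Finset.sum_congr rfl (fun j _ => hptw j), Finset.sum_add_distrib,
      Finset.sum_const, Finset.sum_ite_eq', Finset.card_univ]
    simp only [Finset.mem_univ, if_true, Fintype.card_fin, nsmul_eq_mul]
    have : ((k:Fin 1)) = k' := Subsingleton.elim _ _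
    rw [this, Matrix.one_apply_eq]
    push_cast
    field_simp
    ring
  -- transpose facts
  have hrFt : rFᵀ = rF := by rw [hrF]; exact Matrix.diagonal_transpose _
  have hJhit : Jhiᵀ = Jhi := by rw [hJhi]; exact Matrix.diagonal_transpose _
  have hKt : Kᵀ = Jhi * (marxSigma n)ᵀ * rF := by
    rw [hK, Matrix.transpose_mul, Matrix.transpose_mul, hrFt, hJhit, Matrix.mul_assoc]
  -- positive definiteness
  have hpsd : (K * Kᵀ).PosSemidef := by
    have h := Matrix.posSemidef_self_mul_conjTranspose K
    rwa [Matrix.conjTranspose_eq_transpose_of_trivial] at h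
  have hG : (K * Kᵀ).PosDef := by
    refine Matrix.posDef_iff_dotProduct_mulVec.mpr ⟨hpsd.1, fun x hx => ?_⟩
    have hw : x ᵥ* K ≠ 0 := by
      intro hw0
      rw [hK, ← Matrix.vecMul_vecMul, ← Matrix.vecMul_vecMul] at hw0
      have hy : (x ᵥ* rF) ᵥ* marxSigma n = 0 := by
        funext j
        have hj := congrFun hw0 j
        rw [hJhi, Matrix.vecMul_diagonal] at hj
        rcases mul_eq_zero.mp hj with h' | h'
        · exact h'
        · exfalso
          by_cases h : (j:ℕ) = n
          · rw [if_pos h] at h'; exact (inv_ne_zero hsqn) h'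
          · rw [if_neg h] at h'; exact one_ne_zero h'
      have hy2 : x ᵥ* rF = 0 := by
        apply sigma_vecMul_inj n
        intro j
        have := congrFun hy j
        simpa [Matrix.vecMul, dotProduct] using this
      apply hx
      funext i
      have hi := congrFun hy2 i
      rw [hrF, Matrix.vecMul_diagonal] at hi
      rcases mul_eq_zero.mp hi with h' | h'
      · exact h'
      · exact absurd h' (hsf i)
    have hsx : star x = x := funext (fun i => rfl)
    have hmv : (K * Kᵀ) *ᵥ x = K *ᵥ (Kᵀ *ᵥ x) := by rw [← Matrix.mulVec_mulVec]
    rw [hsx, hmv, dotProduct_mulVec, Matrix.mulVec_transpose]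
    have hge : 0 ≤ (x ᵥ* K) ⬝ᵥ (x ᵥ* K) := by
      apply Finset.sum_nonneg
      intro i _
      exact mul_self_nonneg _
    rcases lt_or_eq_of_le hge with h' | h'
    · exact h'
    · exact absurd (dotProduct_self_eq_zero.mp h'.symm) hw
  -- K*Kᵀ = rF * B * rF
  have hJ2 : Jhi * Jhi =
      Matrix.diagonal (fun j : Fin (n+1) => if (j:ℕ) = n then ((n:ℝ))⁻¹ else 1) := by
    rw [hJhi, Matrix.diagonal_mul_diagonal]
    apply congrArg; funext j
    by_cases h : (j:ℕ) = n
    · simp only [if_pos h]; rw [← mul_inv, hsq]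
    · simp [h]
  have cJ2 : ∀ (X : Matrix (Fin (n+1)) (Fin n) ℝ), Jhi * (Jhi * X) =
      Matrix.diagonal (fun j : Fin (n+1) => if (j:ℕ) = n then ((n:ℝ))⁻¹ else 1) * X := by
    intro X; rw [← Matrix.mul_assoc, hJ2]
  have hKKt : K * Kᵀ = rF * marxB n * rF := by
    rw [← sigma_diag_sigmaT n hn, hK, hKt]
    simp only [Matrix.mul_assoc]
    rw [cJ2]
  -- block identities
  have hff : rF * rF = Matrix.diagonal f := by
    rw [hrF, Matrix.diagonal_mul_diagonal]
    apply congrArg; funext i; exact Real.mul_self_sqrt (hf i).le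
  have hJD : Jhi * Dw = marxJm n := by
    rw [hJhi, hDw, Matrix.diagonal_mul_diagonal]
    unfold marxJm
    apply congrArg; funext j
    by_cases h : (j:ℕ) = n
    · simp only [if_pos h]; rw [mul_neg, inv_mul_cancel₀ hsqn]
    · simp [h]
  have hblock1 : Matrix.diagonal f * marxSigma n * marxJm n = rF * K * Dw := by
    rw [hK]
    simp only [← Matrix.mul_assoc]
    rw [hff, Matrix.mul_assoc (Matrix.diagonal f * marxSigma n) Jhi Dw, hJD]
  have hJinv : (marxJ n)⁻¹ =
      Matrix.diagonal (fun j : Fin (n+1) => if (j:ℕ) = n then ((n:ℝ))⁻¹ else 1) := by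
    apply Matrix.inv_eq_right_inv
    rw [marxJ, Matrix.diagonal_mul_diagonal]
    refine diag_one _ (fun j => ?_)
    by_cases h : (j:ℕ) = n <;> simp [h, mul_inv_cancel₀ hn0]
  have hdd : (marxJ n)⁻¹ * marxJm n = Dwi * Jhi := by
    rw [hJinv, hDwi, hJhi, marxJm, Matrix.diagonal_mul_diagonal, Matrix.diagonal_mul_diagonal]
    apply congrArg; funext j
    by_cases h : (j:ℕ) = n
    · simp only [if_pos h]; rw [mul_neg_one, neg_mul, ← mul_inv, hsq]
    · simp [h]
  have hblock2 : (marxJ n)⁻¹ * marxJm n * (marxSigma n)ᵀ = Dwi * Kᵀ * rFi := by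
    rw [hKt]
    simp only [← Matrix.mul_assoc]
    rw [Matrix.mul_assoc (Dwi * Jhi * (marxSigma n)ᵀ) rF rFi, hEEi, Matrix.mul_one, hdd]
  exact ⟨K, zr, rF, rFi, Dw, Dwi, hrF, hEEi, hEiE, hDDi, hDiD, hz, hzz, hG, hKKt, hblock1,
    hblock2⟩

/-- there is an invertible real `N` with `Nᵀ·N = I + √F·B·√F`
such that `A₀` is similar over ℝ (after a bijective reindexing of coordinates)
to `ω₀ · blockdiag(0ₙ, [[0,1],[−1,0]], [[0, Nᵀ],[−N, 0]])`. -/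
theorem statement15 (n : ℕ) (hn : 1 ≤ n) (ℓ c : ℝ) (hℓ : 0 < ℓ) (hc : 0 < c)
    (f : Fin n → ℝ) (hf : ∀ i, 0 < f i)
    (ω₀ : ℝ) (hω₀ : ω₀ = 1 / Real.sqrt (ℓ * c)) :
    ∃ N : Matrix (Fin n) (Fin n) ℝ, IsUnit N.det ∧
      Nᵀ * N = 1 + Matrix.diagonal (fun i => Real.sqrt (f i)) * marxB n *
        Matrix.diagonal (fun i => Real.sqrt (f i)) ∧
      ∃ (e : ((Fin n ⊕ Fin (n + 1)) ⊕ Fin (n + 1)) ≃ (Fin n ⊕ (Fin 2 ⊕ (Fin n ⊕ Fin n))))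
        (P : Matrix (Fin n ⊕ (Fin 2 ⊕ (Fin n ⊕ Fin n)))
          (Fin n ⊕ (Fin 2 ⊕ (Fin n ⊕ Fin n))) ℝ), IsUnit P.det ∧
        P * (Matrix.reindex e e (marxA0 n ℓ c f)) * P⁻¹ =
          ω₀ • Matrix.fromBlocks (0 : Matrix (Fin n) (Fin n) ℝ) 0 0
            (Matrix.fromBlocks !![(0 : ℝ), 1; -1, 0] 0 0
              (Matrix.fromBlocks (0 : Matrix (Fin n) (Fin n) ℝ) Nᵀ (-N) 0)) := by
  obtain ⟨K, zr, rF, rFi, Dw, Dwi, hrF, hEEi, hEiE, hDDi, hDiD, hz, hzz, hG, hKKt, hb1, hb2⟩ :=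
    inst n hn f hf
  set s := Real.sqrt ℓ with hs
  set t := Real.sqrt c with ht
  have hs0 : 0 < s := Real.sqrt_pos.mpr hℓ
  have ht0 : 0 < t := Real.sqrt_pos.mpr hc
  have hss : s * s = ℓ := Real.mul_self_sqrt hℓ.le
  have htt : t * t = c := Real.mul_self_sqrt hc.le
  have hω : ω₀ = 1 / (s * t) := by rw [hω₀, Real.sqrt_mul hℓ.le]
  have h1 : ω₀ * (s / t) = 1 / c := by rw [hω, ← htt]; field_simp
  have h2 : (s / t) * (1 / ℓ) = ω₀ := by rw [hω, ← hss]; field_simp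
  have h3 : (s / t) * (t / s) = 1 := by field_simp
  obtain ⟨N, hNu, hNtN, P', Q', hPQ, hPA⟩ :=
    core n c ℓ ω₀ (s / t) (t / s) K zr rF rFi Dw Dwi hEEi hEiE hDDi hDiD hz hzz hG h1 h2 h3
  have hA0 : marxA0 n ℓ c f = Matrix.fromBlocks 0
      (Matrix.fromRows (-(1 / c) • (rF * K * Dw)) ((1 / c) • 1))
      (Matrix.fromCols ((1 / ℓ) • (Dwi * Kᵀ * rFi)) (-(1 / ℓ) • 1)) 0 := by
    rw [marxA0, hb1, hb2]
  let e2 : (Fin 1 ⊕ Fin 1) ≃ Fin 2 := finSumFinEquiv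
  have hs0' : e2.symm 0 = Sum.inl 0 := by decide
  have hs1' : e2.symm 1 = Sum.inr 0 := by decide
  set eβ : (Fin n ⊕ ((Fin 1 ⊕ Fin 1) ⊕ (Fin n ⊕ Fin n))) ≃ (Fin n ⊕ (Fin 2 ⊕ (Fin n ⊕ Fin n))) :=
    (Equiv.refl (Fin n)).sumCongr (e2.sumCongr (Equiv.refl (Fin n ⊕ Fin n))) with heβ
  have e : ((Fin n ⊕ Fin (n+1)) ⊕ Fin (n+1)) ≃ (Fin n ⊕ (Fin 2 ⊕ (Fin n ⊕ Fin n))) :=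
    Fintype.equivOfCardEq (by simp; omega)
  set P : Matrix (Fin n ⊕ (Fin 2 ⊕ (Fin n ⊕ Fin n))) (Fin n ⊕ (Fin 2 ⊕ (Fin n ⊕ Fin n))) ℝ :=
    P'.submatrix eβ.symm e.symm with hPdef
  have hPQ1 : P * Q'.submatrix e.symm eβ.symm = 1 := by
    rw [hPdef, Matrix.submatrix_mul_equiv P' Q' eβ.symm e.symm eβ.symm, hPQ,
      Matrix.submatrix_one_equiv]
  have hPdet : IsUnit P.det := Matrix.isUnit_det_of_right_inverse hPQ1
  have hT : (ω₀ • Matrix.fromBlocks (0 : Matrix (Fin n) (Fin n) ℝ) 0 0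
        (Matrix.fromBlocks !![(0 : ℝ), 1; -1, 0] 0 0
          (Matrix.fromBlocks (0 : Matrix (Fin n) (Fin n) ℝ) Nᵀ (-N) 0))) =
      (ω₀ • Matrix.fromBlocks 0 0 0
        (Matrix.fromBlocks (Matrix.fromBlocks 0 1 (-1) 0) 0 0
          (Matrix.fromBlocks 0 Nᵀ (-N) 0))).submatrix eβ.symm eβ.symm := by
    ext i j
    rcases i with i | (i | (i | i)) <;> rcases j with j | (j | (j | j)) <;>
      first
        | (fin_cases i <;> fin_cases j <;>
            simp [heβ, hs0', hs1', Matrix.fromBlocks, Matrix.one_apply])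
        | simp [heβ, hs0', hs1', Matrix.fromBlocks, Matrix.one_apply]
  have hmain : P * (Matrix.reindex e e (marxA0 n ℓ c f)) =
      (ω₀ • Matrix.fromBlocks (0 : Matrix (Fin n) (Fin n) ℝ) 0 0
        (Matrix.fromBlocks !![(0 : ℝ), 1; -1, 0] 0 0
          (Matrix.fromBlocks (0 : Matrix (Fin n) (Fin n) ℝ) Nᵀ (-N) 0))) * P := by
    rw [Matrix.reindex_apply, hA0, hPdef,
      Matrix.submatrix_mul_equiv P' _ eβ.symm e.symm e.symm, hPA, hT,
      Matrix.submatrix_mul_equiv _ P' eβ.symm eβ.symm e.symm]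
  refine ⟨N, hNu, by rw [hNtN, hKKt, hrF], e, P, hPdet, ?_⟩
  rw [hmain, Matrix.mul_assoc, Matrix.mul_nonsing_inv _ hPdet, Matrix.mul_one]

end
end
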